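/- arXiv:2311.00774 — 4 statements merged into one kernel-verified Lean document; each statement's English description precedes it below -/
import Mathlib

section
/- Let S_cal be N exchangeable real-valued scores together with a test score S_test (all N+1 exchangeable and almost surely distinct). Let q̂ be the ⌈(N+1)(1−α)⌉-th smallest value of S_cal. Then P(S_test ≤ q̂) ≥ 1 − α. -/
open MeasureTheory Finset ENNReal

/-- The `k`-th smallest value (1-indexed) of a finite family of reals. -/
noncomputable def kthSmallest {N : ℕ} (g : Fin N → ℝ) (k : ℕ) : ℝ :=
  ((List.ofFn g).mergeSort (· ≤ ·)).getD (k - 1) 0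

section Aux

variable {n : ℕ}

/-- The rank of coordinate `j` in the family `g`. -/
noncomputable def rnk (g : Fin n → ℝ) (j : Fin n) : ℕ :=
  (Finset.univ.filter fun i => g i ≤ g j).card

lemma card_filter_val_lt (k : ℕ) (h : k ≤ n) :
    ((Finset.univ : Finset (Fin n)).filter (fun m : Fin n => (m : ℕ) < k)).card = k := by
  have h1 : ((Finset.univ : Finset (Fin n)).filter (fun m : Fin n => (m : ℕ) < k)).card
      = (Finset.range k).card := by
    apply Finset.card_bij (fun (m : Fin n) _ => (m : ℕ))
    · intro a ha; simp only [mem_filter, mem_univ, true_and] at ha; simpa using ha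
    · intro a _ b _ hab; exact Fin.val_injective hab
    · intro b hb
      simp only [Finset.mem_range] at hb
      exact ⟨⟨b, lt_of_lt_of_le hb h⟩, by simpa using hb, rfl⟩
  rw [h1, Finset.card_range]

lemma card_filter_perm (σ : Equiv.Perm (Fin n)) (p : Fin n → Prop) [DecidablePred p] :
    (Finset.univ.filter fun j => p (σ j)).card = (Finset.univ.filter p).card := by
  apply Finset.card_bij (fun j _ => σ j)
  · intro a ha; simp only [mem_filter, mem_univ, true_and] at ha ⊢; exact ha
  · intro a _ b _ hab; exact σ.injective hab
  · intro b hb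
    simp only [mem_filter, mem_univ, true_and] at hb ⊢
    exact ⟨σ.symm b, by simpa using hb, by simp⟩

lemma rnk_comp_perm (g : Fin n → ℝ) (σ : Equiv.Perm (Fin n)) (j : Fin n) :
    rnk (g ∘ σ) j = rnk g (σ j) := by
  unfold rnk
  exact card_filter_perm σ (fun i => g i ≤ g (σ j))

lemma rnk_sort (g : Fin n → ℝ) (hg : Function.Injective g) (m : Fin n) :
    rnk g (Tuple.sort g m) = m + 1 := by
  have hsm : StrictMono (g ∘ Tuple.sort g) :=
    (Tuple.monotone_sort g).strictMono_of_injective (hg.comp (Tuple.sort g).injective)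
  have h1 : rnk g (Tuple.sort g m) = rnk (g ∘ Tuple.sort g) m := (rnk_comp_perm g _ m).symm
  rw [h1]
  unfold rnk
  have h2 : (Finset.univ.filter fun i => (g ∘ Tuple.sort g) i ≤ (g ∘ Tuple.sort g) m)
      = Finset.Iic m := by
    ext i
    simp only [Finset.mem_filter, Finset.mem_univ, true_and, Finset.mem_Iic]
    exact hsm.le_iff_le
  rw [h2, Fin.card_Iic]

lemma card_rnk_le (g : Fin n → ℝ) (hg : Function.Injective g) (k : ℕ) (hk : k ≤ n) :
    (Finset.univ.filter fun j => rnk g j ≤ k).card = k := by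
  rw [← card_filter_perm (Tuple.sort g) (fun j => rnk g j ≤ k)]
  have h1 : (Finset.univ.filter fun m : Fin n => rnk g (Tuple.sort g m) ≤ k)
      = Finset.univ.filter (fun m : Fin n => (m : ℕ) < k) := by
    ext m
    simp only [Finset.mem_filter, Finset.mem_univ, true_and, rnk_sort g hg m]
    omega
  rw [h1, card_filter_val_lt k hk]

lemma mem_iff_lt_card_of_dc (T : Finset (Fin n)) (hdc : ∀ i j : Fin n, i ≤ j → j ∈ T → i ∈ T)
    (m : Fin n) : m ∈ T ↔ (m : ℕ) < T.card := by
  constructor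
  · intro hm
    have hsub : Finset.Iic m ⊆ T := fun i hi => hdc i m (Finset.mem_Iic.mp hi) hm
    have := Finset.card_le_card hsub
    rw [Fin.card_Iic] at this; omega
  · intro hm
    by_contra hmem
    have hsub : T ⊆ Finset.Iio m := by
      intro j hj
      rw [Finset.mem_Iio]
      by_contra hj'
      exact hmem (hdc m j (le_of_not_gt hj') hj)
    have := Finset.card_le_card hsub
    rw [Fin.card_Iio] at this; omega

lemma le_iff_card_filter_lt {v : Fin n → ℝ} (hv : Monotone v) (x : ℝ) (m : Fin n) :
    x ≤ v m ↔ (Finset.univ.filter fun i => v i < x).card ≤ (m : ℕ) := by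
  set T := Finset.univ.filter fun i => v i < x with hT
  have hdc : ∀ i j : Fin n, i ≤ j → j ∈ T → i ∈ T := by
    intro i j hij hj
    simp only [hT, mem_filter, mem_univ, true_and] at hj ⊢
    exact lt_of_le_of_lt (hv hij) hj
  have h1 : (v m < x) ↔ (m : ℕ) < T.card := by
    rw [← mem_iff_lt_card_of_dc T hdc m]; simp [hT]
  rw [← not_lt, h1, not_lt]

lemma mergeSort_ofFn_eq (h : Fin n → ℝ) :
    (List.ofFn h).mergeSort (· ≤ ·) = List.ofFn (h ∘ Tuple.sort h) :=
  List.Perm.eq_of_sortedLE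
    (List.sortedLE_mergeSort)
    ((Tuple.monotone_sort h).sortedLE_ofFn)
    ((List.mergeSort_perm _ _).trans ((Tuple.sort h).ofFn_comp_perm h).symm)

lemma kthSmallest_eq (h : Fin n → ℝ) (k : ℕ) (hk1 : 1 ≤ k) (hkn : k ≤ n) :
    kthSmallest h k = (h ∘ Tuple.sort h) ⟨k - 1, by omega⟩ := by
  unfold kthSmallest
  rw [mergeSort_ofFn_eq]
  have hlen : k - 1 < (List.ofFn (h ∘ Tuple.sort h)).length := by simp; omega
  rw [List.getD_eq_getElem _ _ hlen, List.getElem_ofFn]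

end Aux

lemma event_iff {N : ℕ} (g : Fin (N + 1) → ℝ) (hg : Function.Injective g)
    (k : ℕ) (hk1 : 1 ≤ k) (hkN : k ≤ N) :
    g (Fin.last N) ≤ kthSmallest (fun i : Fin N => g i.castSucc) k ↔ rnk g (Fin.last N) ≤ k := by
  set h : Fin N → ℝ := fun i => g i.castSucc with hh
  have hmono : Monotone (h ∘ Tuple.sort h) := Tuple.monotone_sort h
  rw [kthSmallest_eq h k hk1 hkN,
    le_iff_card_filter_lt hmono (g (Fin.last N)) ⟨k - 1, by omega⟩]
  have hperm : (Finset.univ.filter fun i => (h ∘ Tuple.sort h) i < g (Fin.last N)).card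
      = (Finset.univ.filter fun i => h i < g (Fin.last N)).card :=
    card_filter_perm (Tuple.sort h) (fun i => h i < g (Fin.last N))
  rw [hperm]
  have hsplit : rnk g (Fin.last N)
      = (Finset.univ.filter fun i : Fin N => h i < g (Fin.last N)).card + 1 := by
    unfold rnk
    rw [Finset.card_filter, Finset.card_filter, Fin.sum_univ_castSucc,
      if_pos (le_refl (g (Fin.last N)))]
    congr 1
    apply Finset.sum_congr rfl
    intro i _
    have hne : g i.castSucc ≠ g (Fin.last N) :=
      fun heq => absurd (hg heq) (Fin.castSucc_lt_last i).ne
    have hiff : (g i.castSucc ≤ g (Fin.last N)) ↔ (h i < g (Fin.last N)) :=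
      ⟨fun hle => lt_of_le_of_ne hle hne, le_of_lt⟩
    exact if_congr hiff rfl rfl
  rw [hsplit]
  simp only [Fin.val_mk]
  omega

lemma measurable_set_rnk_le {n : ℕ} (j : Fin n) (k : ℕ) :
    MeasurableSet {g : Fin n → ℝ | rnk g j ≤ k} := by
  have hm : Measurable fun g : Fin n → ℝ => rnk g j := by
    unfold rnk
    simp_rw [Finset.card_filter]
    apply Finset.measurable_sum
    intro i _
    exact Measurable.ite
      (measurableSet_le (measurable_pi_apply i) (measurable_pi_apply j))
      measurable_const measurable_const
  exact hm (by trivial : MeasurableSet {m : ℕ | m ≤ k})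

/-- Split conformal prediction lower coverage bound: if the `N` calibration scores together
with the test score are exchangeable and almost surely distinct, and `q̂` is the
`⌈(N+1)(1-α)⌉`-th smallest calibration score, then `P(S_test ≤ q̂) ≥ 1 - α`. -/
theorem split_conformal_coverage_lower
    {Ω : Type*} [MeasurableSpace Ω] (P : Measure Ω) [IsProbabilityMeasure P]
    (N : ℕ) (hN : 0 < N) (S : Fin (N + 1) → Ω → ℝ)
    (hmeas : ∀ i, Measurable (S i))
    (hexch : ∀ σ : Equiv.Perm (Fin (N + 1)),
      P.map (fun ω => fun i => S (σ i) ω) = P.map (fun ω => fun i => S i ω))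
    (hdistinct : ∀ᵐ ω ∂P, Function.Injective fun i => S i ω)
    (α : ℝ) (hα : α ∈ Set.Ioo (0 : ℝ) 1)
    (hk : ⌈((N : ℝ) + 1) * (1 - α)⌉₊ ≤ N) :
    ENNReal.ofReal (1 - α) ≤
      P {ω | S (Fin.last N) ω ≤
        kthSmallest (fun i : Fin N => S i.castSucc ω) ⌈((N : ℝ) + 1) * (1 - α)⌉₊} := by
  obtain ⟨hα0, hα1⟩ := hα
  set k := ⌈((N : ℝ) + 1) * (1 - α)⌉₊ with hkdef
  have hk1 : 1 ≤ k := by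
    rw [hkdef]
    exact Nat.one_le_iff_ne_zero.mpr (Nat.ceil_pos.mpr (by nlinarith)).ne'
  set V : Ω → (Fin (N + 1) → ℝ) := fun ω i => S i ω with hV
  have hVmeas : Measurable V := measurable_pi_lambda _ hmeas
  set E : Fin (N + 1) → Set Ω := fun j => V ⁻¹' {g | rnk g j ≤ k} with hE
  have hEmeas : ∀ j, MeasurableSet (E j) := fun j => hVmeas (measurable_set_rnk_le j k)
  -- all events have equal probability
  have hEeq : ∀ j, P (E j) = P (E (Fin.last N)) := by
    intro j
    set σ := Equiv.swap j (Fin.last N) with hσ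
    have h1 : Measurable (fun ω => fun i => S (σ i) ω) :=
      measurable_pi_lambda _ (fun i => hmeas _)
    have happ := congrArg (fun μ : Measure (Fin (N + 1) → ℝ) =>
      μ {g | rnk g (Fin.last N) ≤ k}) (hexch σ)
    rw [Measure.map_apply h1 (measurable_set_rnk_le _ k),
      Measure.map_apply hVmeas (measurable_set_rnk_le _ k)] at happ
    have hpre : (fun ω => fun i => S (σ i) ω) ⁻¹' {g | rnk g (Fin.last N) ≤ k} = E j := by
      ext ω
      simp only [hE, Set.mem_preimage, Set.mem_setOf_eq]
      have hc : (fun i => S (σ i) ω) = V ω ∘ σ := rfl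
      rw [hc, rnk_comp_perm (V ω) σ (Fin.last N),
        show σ (Fin.last N) = j from Equiv.swap_apply_right _ _]
    rw [hpre] at happ
    exact happ
  -- the sum of the probabilities equals k
  have hsum : ∑ j : Fin (N + 1), P (E j) = (k : ℝ≥0∞) := by
    calc ∑ j : Fin (N + 1), P (E j)
        = ∑ j : Fin (N + 1), ∫⁻ ω, (E j).indicator (fun _ => (1 : ℝ≥0∞)) ω ∂P := by
          refine Finset.sum_congr rfl fun j _ => ?_
          rw [lintegral_indicator (hEmeas j)]
          simp
      _ = ∫⁻ ω, ∑ j : Fin (N + 1), (E j).indicator (fun _ => (1 : ℝ≥0∞)) ω ∂P :=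
          (lintegral_finset_sum _ (fun j _ => (measurable_const.indicator (hEmeas j)))).symm
      _ = ∫⁻ ω, (k : ℝ≥0∞) ∂P := by
          refine lintegral_congr_ae ?_
          filter_upwards [hdistinct] with ω hω
          have hinj : Function.Injective (V ω) := hω
          have hind : ∀ j : Fin (N + 1), (E j).indicator (fun _ => (1 : ℝ≥0∞)) ω
              = if rnk (V ω) j ≤ k then 1 else 0 := by
            intro j
            by_cases hj : rnk (V ω) j ≤ k
            · rw [Set.indicator_of_mem (by exact hj) , if_pos hj]
            · rw [Set.indicator_of_notMem (by exact hj), if_neg hj]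
          rw [Finset.sum_congr rfl (fun j _ => hind j), Finset.sum_boole,
            card_rnk_le (V ω) hinj k (by omega)]
      _ = (k : ℝ≥0∞) := by simp
  -- hence (N+1) * P(E last) = k
  have hconst : ((N : ℝ≥0∞) + 1) * P (E (Fin.last N)) = (k : ℝ≥0∞) := by
    rw [← hsum, Finset.sum_congr rfl (fun j _ => hEeq j), Finset.sum_const, Finset.card_univ,
      Fintype.card_fin, nsmul_eq_mul]
    push_cast
    ring
  -- conclude the bound for E last
  have hPle : ENNReal.ofReal (1 - α) ≤ P (E (Fin.last N)) := by
    have hc0 : ((N : ℝ≥0∞) + 1) ≠ 0 := by simp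
    have hctop : ((N : ℝ≥0∞) + 1) ≠ ⊤ := by simp
    rw [← ENNReal.mul_le_mul_iff_right hc0 hctop, hconst]
    have h1 : ((N : ℝ≥0∞) + 1) = ENNReal.ofReal ((N : ℝ) + 1) := by
      rw [ENNReal.ofReal_add (by positivity) zero_le_one]
      simp
    rw [h1, ← ENNReal.ofReal_mul (by positivity)]
    calc ENNReal.ofReal (((N : ℝ) + 1) * (1 - α))
        ≤ ENNReal.ofReal (k : ℝ) := ENNReal.ofReal_le_ofReal (by
          rw [hkdef]; exact Nat.le_ceil _)
      _ = (k : ℝ≥0∞) := ENNReal.ofReal_natCast k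
  -- transfer to the target event
  refine hPle.trans (le_of_eq (measure_congr ?_))
  rw [Filter.eventuallyEq_set]
  filter_upwards [hdistinct] with ω hω
  have hinj : Function.Injective (V ω) := hω
  exact (event_iff (V ω) hinj k hk1 hk).symm
end

section
/- Under the same exchangeability assumptions with almost surely distinct scores, P(S_test ≤ q̂) ≤ 1 − α + 1/(N+1), where q̂ is the ⌈(N+1)(1−α)⌉-th smallest of the N calibration scores. -/
open MeasureTheory
open scoped ENNReal

section Aux

/-- countP over `ofFn` equals a filtered card over `Fin n`. -/
lemma countP_ofFn' {n : ℕ} (g : Fin n → ℝ) (p : ℝ → Bool) :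
    (List.ofFn g).countP p = (Finset.univ.filter (fun i => p (g i))).card := by
  rw [List.ofFn_eq_map, List.countP_map, List.countP_eq_length_filter, Fin.univ_def]
  simp [Finset.filter, Finset.card, Multiset.filter_coe, Function.comp_def]

/-- In a sorted list, if `t ≤ l[m]` then at most `m` entries are `< t`. -/
lemma countP_lt_le_of_le_getElem (l : List ℝ) (hl : l.Pairwise (· ≤ ·)) (m : ℕ)
    (hm : m < l.length) (t : ℝ) (ht : t ≤ l[m]) :
    l.countP (fun x => decide (x < t)) ≤ m := by
  have h0 : l.countP (fun x => decide (x < t)) =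
      (l.take m).countP (fun x => decide (x < t)) +
      (l.drop m).countP (fun x => decide (x < t)) := by
    conv_lhs => rw [← List.take_append_drop m l]
    rw [List.countP_append]
  have h1 : (l.drop m).countP (fun x => decide (x < t)) = 0 := by
    rw [List.countP_eq_zero]
    intro x hx
    obtain ⟨i, hi, hix⟩ := List.mem_iff_getElem.mp hx
    have hlen : m + i < l.length := by
      have := hi; rw [List.length_drop] at this; omega
    have hle : l[m] ≤ l[m + i] := by
      have := hl.rel_get_of_le (a := ⟨m, hm⟩) (b := ⟨m + i, hlen⟩) (by simp)
      simpa using this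
    rw [List.getElem_drop] at hix
    simp only [decide_eq_true_eq, not_lt]
    subst hix
    linarith
  have h2 : (l.take m).countP (fun x => decide (x < t)) ≤ m :=
    le_trans List.countP_le_length (by simp)
  omega

/-- Rank (number of strictly smaller entries) of coordinate `j` in vector `v`. -/
noncomputable def rankLt {M : ℕ} (v : Fin M → ℝ) (j : Fin M) : ℕ :=
  (Finset.univ.filter fun i => v i < v j).card

lemma measurable_rankLt {M : ℕ} (j : Fin M) :
    Measurable fun v : Fin M → ℝ => rankLt v j := by
  have h : (fun v : Fin M → ℝ => rankLt v j)
      = fun v => ∑ i : Fin M, if v i < v j then 1 else 0 := by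
    funext v; rw [rankLt, Finset.card_filter]
  rw [h]
  exact Finset.measurable_sum _ fun i _ =>
    Measurable.ite (measurableSet_lt (measurable_pi_apply i) (measurable_pi_apply j))
      measurable_const measurable_const

lemma rankLt_lt_of_lt {M : ℕ} {v : Fin M → ℝ} {j j' : Fin M} (h : v j < v j') :
    rankLt v j < rankLt v j' := by
  apply Finset.card_lt_card
  have hsub : (Finset.univ.filter fun i => v i < v j) ⊆
      (Finset.univ.filter fun i => v i < v j') := by
    intro i hi
    simp only [Finset.mem_filter, Finset.mem_univ, true_and] at *
    exact hi.trans h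
  rw [Finset.ssubset_iff_of_subset hsub]
  exact ⟨j, Finset.mem_filter.2 ⟨Finset.mem_univ _, h⟩, by simp⟩

lemma rankLt_inj {M : ℕ} {v : Fin M → ℝ} (hv : Function.Injective v) {j j' : Fin M}
    (h : rankLt v j = rankLt v j') : j = j' := by
  rcases lt_trichotomy (v j) (v j') with hlt | heq | hgt
  · exact absurd h (Nat.ne_of_lt (rankLt_lt_of_lt hlt))
  · exact hv heq
  · exact absurd h.symm (Nat.ne_of_lt (rankLt_lt_of_lt hgt))

lemma rankLt_comp {M : ℕ} (v : Fin M → ℝ) (σ : Equiv.Perm (Fin M)) (j : Fin M) :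
    rankLt (fun i => v (σ i)) j = rankLt v (σ j) := by
  unfold rankLt
  apply Finset.card_equiv σ
  intro i
  simp

/-- Rank of the last coordinate = number of the first `N` coordinates strictly below it. -/
lemma rankLt_last {N : ℕ} (v : Fin (N + 1) → ℝ) :
    rankLt v (Fin.last N) =
      (Finset.univ.filter fun i : Fin N => v i.castSucc < v (Fin.last N)).card := by
  unfold rankLt
  rw [Finset.card_filter, Finset.card_filter, Fin.sum_univ_castSucc]
  simp

lemma final_num (N k : ℕ) (α : ℝ) (hkx : (k : ℝ) ≤ ((N : ℝ) + 1) * (1 - α) + 1) :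
    (k : ℝ≥0∞) * (((N : ℕ) : ℝ≥0∞) + 1)⁻¹ ≤ ENNReal.ofReal (1 - α + 1 / ((N : ℝ) + 1)) := by
  have hN1 : (0 : ℝ) < (N : ℝ) + 1 := by positivity
  have e1 : ((N : ℕ) : ℝ≥0∞) + 1 = ENNReal.ofReal ((N : ℝ) + 1) := by
    rw [ENNReal.ofReal_add (Nat.cast_nonneg N) zero_le_one, ENNReal.ofReal_natCast,
      ENNReal.ofReal_one]
  have e2 : (k : ℝ≥0∞) = ENNReal.ofReal (k : ℝ) := by simp
  rw [e1, ← ENNReal.ofReal_inv_of_pos hN1, e2,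
    ← ENNReal.ofReal_mul (by positivity)]
  apply ENNReal.ofReal_le_ofReal
  have h2 : (k : ℝ) * ((N : ℝ) + 1)⁻¹ ≤ (((N : ℝ) + 1) * (1 - α) + 1) * ((N : ℝ) + 1)⁻¹ :=
    mul_le_mul_of_nonneg_right hkx (by positivity)
  calc (k : ℝ) * ((N : ℝ) + 1)⁻¹ ≤ (((N : ℝ) + 1) * (1 - α) + 1) * ((N : ℝ) + 1)⁻¹ := h2
    _ = 1 - α + 1 / ((N : ℝ) + 1) := by field_simp

end Aux

/-- Split conformal prediction upper coverage bound: if the `N` calibration scores together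
with the test score are exchangeable and almost surely distinct, and `q̂` is the
`⌈(N+1)(1-α)⌉`-th smallest calibration score, then `P(S_test ≤ q̂) ≤ 1 - α + 1/(N+1)`. -/
theorem split_conformal_coverage_upper
    {Ω : Type*} [MeasurableSpace Ω] (P : Measure Ω) [IsProbabilityMeasure P]
    (N : ℕ) (hN : 0 < N) (S : Fin (N + 1) → Ω → ℝ)
    (hmeas : ∀ i, Measurable (S i))
    (hexch : ∀ σ : Equiv.Perm (Fin (N + 1)),
      P.map (fun ω => fun i => S (σ i) ω) = P.map (fun ω => fun i => S i ω))
    (hdistinct : ∀ᵐ ω ∂P, Function.Injective fun i => S i ω)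
    (α : ℝ) (hα : α ∈ Set.Ioo (0 : ℝ) 1)
    (hk : ⌈((N : ℝ) + 1) * (1 - α)⌉₊ ≤ N) :
    P {ω | S (Fin.last N) ω ≤
        kthSmallest (fun i : Fin N => S i.castSucc ω) ⌈((N : ℝ) + 1) * (1 - α)⌉₊} ≤
      ENNReal.ofReal (1 - α + 1 / ((N : ℝ) + 1)) := by
  set k : ℕ := ⌈((N : ℝ) + 1) * (1 - α)⌉₊ with hkdef
  have hx0 : (0 : ℝ) < ((N : ℝ) + 1) * (1 - α) :=
    mul_pos (by positivity) (by linarith [hα.2])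
  have hk1 : 1 ≤ k := Nat.one_le_iff_ne_zero.mpr (by
    simp only [hkdef, ← Nat.pos_iff_ne_zero]
    exact Nat.ceil_pos.mpr hx0)
  -- the joint score vector
  set vec : Ω → (Fin (N + 1) → ℝ) := fun ω i => S i ω with hvecdef
  have hvec : Measurable vec := measurable_pi_lambda _ hmeas
  set μ : Measure (Fin (N + 1) → ℝ) := P.map vec with hμdef
  haveI : IsProbabilityMeasure μ := Measure.isProbabilityMeasure_map hvec.aemeasurable
  -- rank level sets
  set A : ℕ → Fin (N + 1) → Set (Fin (N + 1) → ℝ) := fun r j => {v | rankLt v j = r}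
    with hAdef
  have hA : ∀ r j, MeasurableSet (A r j) := fun r j =>
    (measurable_rankLt j) (measurableSet_singleton r)
  -- distinct vectors
  set D : Set (Fin (N + 1) → ℝ) := {v | Function.Injective v} with hDdef
  have hD : MeasurableSet D := by
    have hDeq : D = (⋃ (i) (j) (_ : i ≠ j), {v : Fin (N + 1) → ℝ | v i = v j})ᶜ := by
      ext v
      simp only [Set.mem_compl_iff, Set.mem_iUnion, Set.mem_setOf_eq, not_exists, hDdef]
      constructor
      · intro hv i j hij hvij; exact hij (hv hvij)
      · intro h i j hvij; by_contra hij; exact h i j hij hvij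
    rw [hDeq]
    exact (MeasurableSet.iUnion fun i => MeasurableSet.iUnion fun j =>
      MeasurableSet.iUnion fun _ =>
        measurableSet_eq_fun (measurable_pi_apply i) (measurable_pi_apply j)).compl
  have hDc : μ Dᶜ = 0 := by
    rw [hμdef, Measure.map_apply hvec hD.compl]
    exact ae_iff.mp hdistinct
  -- exchangeability transferred to μ
  have hmapped : ∀ σ : Equiv.Perm (Fin (N + 1)),
      μ.map (fun v => fun i => v (σ i)) = μ := by
    intro σ
    have hg : Measurable (fun v : Fin (N + 1) → ℝ => fun i => v (σ i)) :=
      measurable_pi_lambda _ fun i => measurable_pi_apply (σ i)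
    rw [hμdef, Measure.map_map hg hvec]
    exact hexch σ
  -- all rank level sets have the same measure as the last one
  have hAeq : ∀ r (j : Fin (N + 1)), μ (A r j) = μ (A r (Fin.last N)) := by
    intro r j
    set σ : Equiv.Perm (Fin (N + 1)) := Equiv.swap j (Fin.last N) with hσdef
    have hg : Measurable (fun v : Fin (N + 1) → ℝ => fun i => v (σ i)) :=
      measurable_pi_lambda _ fun i => measurable_pi_apply (σ i)
    have h1 : μ ((fun v : Fin (N + 1) → ℝ => fun i => v (σ i)) ⁻¹' (A r (Fin.last N)))
        = μ (A r (Fin.last N)) := by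
      conv_rhs => rw [← hmapped σ]
      rw [Measure.map_apply hg (hA r (Fin.last N))]
    have h2 : (fun v : Fin (N + 1) → ℝ => fun i => v (σ i)) ⁻¹' (A r (Fin.last N))
        = A r j := by
      ext v
      simp only [Set.mem_preimage, hAdef, Set.mem_setOf_eq, rankLt_comp]
      rw [hσdef, Equiv.swap_apply_right]
    rw [← h2, h1]
  -- each rank level set of the last coordinate has measure ≤ 1/(N+1)
  have hsum : ∀ r : ℕ, μ (A r (Fin.last N)) ≤ (((N : ℕ) : ℝ≥0∞) + 1)⁻¹ := by
    intro r
    have hdisj : Pairwise (Function.onFun Disjoint fun j : Fin (N + 1) => A r j ∩ D) := by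
      intro j j' hne
      rw [Function.onFun, Set.disjoint_left]
      rintro v ⟨hv1, hv2⟩ ⟨hv3, _⟩
      exact hne (rankLt_inj hv2 (hv1.trans hv3.symm))
    have hun : μ (⋃ j : Fin (N + 1), (A r j ∩ D)) = ∑ j : Fin (N + 1), μ (A r j ∩ D) := by
      rw [measure_iUnion hdisj fun j => (hA r j).inter hD, tsum_fintype]
    have hinter : ∀ j : Fin (N + 1), μ (A r j ∩ D) = μ (A r j) := by
      intro j
      apply le_antisymm (measure_mono Set.inter_subset_left)
      calc μ (A r j) ≤ μ (A r j ∩ D) + μ (A r j \ D) := measure_le_inter_add_diff μ _ _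
        _ ≤ μ (A r j ∩ D) + μ Dᶜ := by
            gcongr
            exact Set.diff_subset_compl _ _
        _ = μ (A r j ∩ D) := by rw [hDc, add_zero]
    have hone : ∑ j : Fin (N + 1), μ (A r j ∩ D) ≤ 1 := by
      rw [← hun]
      exact prob_le_one
    have hcard : (N + 1 : ℝ≥0∞) * μ (A r (Fin.last N)) ≤ 1 := by
      have : ∑ j : Fin (N + 1), μ (A r j ∩ D)
          = ∑ _j : Fin (N + 1), μ (A r (Fin.last N)) := by
        apply Finset.sum_congr rfl
        intro j _
        rw [hinter j, hAeq r j]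
      rw [this, Finset.sum_const, Finset.card_univ, Fintype.card_fin, nsmul_eq_mul] at hone
      simpa using hone
    rw [ENNReal.le_inv_iff_mul_le, mul_comm]
    simpa using hcard
  -- event inclusion into the rank event
  have hEvent : {ω | S (Fin.last N) ω ≤
        kthSmallest (fun i : Fin N => S i.castSucc ω) k}
      ⊆ vec ⁻¹' (⋃ r ∈ Finset.range k, A r (Fin.last N)) := by
    intro ω hω
    simp only [Set.mem_setOf_eq] at hω
    set g : Fin N → ℝ := fun i => S i.castSucc ω with hgdef
    set t : ℝ := S (Fin.last N) ω with htdef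
    set l : List ℝ := (List.ofFn g).mergeSort (· ≤ ·) with hldef
    have hlen : l.length = N := by
      rw [hldef, (List.mergeSort_perm _ _).length_eq, List.length_ofFn]
    have hklen : k - 1 < l.length := by omega
    have hget : kthSmallest g k = l[k - 1] := by
      rw [kthSmallest, ← hldef, List.getD_eq_getElem l 0 hklen]
    have hcount : l.countP (fun x => decide (x < t)) ≤ k - 1 := by
      apply countP_lt_le_of_le_getElem l (List.pairwise_mergeSort' _ _) _ hklen
      rw [← hget]
      exact hω
    have hcount2 : (List.ofFn g).countP (fun x => decide (x < t)) ≤ k - 1 := by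
      rwa [← (List.mergeSort_perm (List.ofFn g) _).countP_eq]
    have hrank : rankLt (vec ω) (Fin.last N) ≤ k - 1 := by
      rw [rankLt_last]
      have : (Finset.univ.filter fun i : Fin N =>
          (vec ω) i.castSucc < (vec ω) (Fin.last N)).card
          = (List.ofFn g).countP (fun x => decide (x < t)) := by
        rw [countP_ofFn']
        congr 1
        apply Finset.filter_congr
        intro i _
        simp only [decide_eq_true_eq]; exact Iff.rfl
      rw [this]
      exact hcount2
    have hrk : rankLt (vec ω) (Fin.last N) < k := by omega
    simp only [Set.mem_preimage, Set.mem_iUnion]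
    exact ⟨rankLt (vec ω) (Fin.last N), Finset.mem_range.mpr hrk, rfl⟩
  -- put everything together
  have hB : MeasurableSet (⋃ r ∈ Finset.range k, A r (Fin.last N)) :=
    (Finset.range k).measurableSet_biUnion fun r _ => hA r _
  calc P {ω | S (Fin.last N) ω ≤
        kthSmallest (fun i : Fin N => S i.castSucc ω) k}
      ≤ P (vec ⁻¹' (⋃ r ∈ Finset.range k, A r (Fin.last N))) := measure_mono hEvent
    _ = μ (⋃ r ∈ Finset.range k, A r (Fin.last N)) := (Measure.map_apply hvec hB).symm
    _ ≤ ∑ r ∈ Finset.range k, μ (A r (Fin.last N)) := measure_biUnion_finset_le _ _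
    _ ≤ ∑ _r ∈ Finset.range k, (((N : ℕ) : ℝ≥0∞) + 1)⁻¹ := Finset.sum_le_sum fun r _ => hsum r
    _ = (k : ℝ≥0∞) * (((N : ℕ) : ℝ≥0∞) + 1)⁻¹ := by
        rw [Finset.sum_const, Finset.card_range, nsmul_eq_mul]
    _ ≤ ENNReal.ofReal (1 - α + 1 / ((N : ℝ) + 1)) := by
        apply final_num
        have := Nat.ceil_lt_add_one (le_of_lt hx0)
        rw [← hkdef] at this
        linarith
end

section
/- Let f : ℝ → ℝ≥0 be a probability density (∫ f = 1) and let t > 0. Among all measurable sets C ⊆ ℝ with ∫_C f ≥ 1 − α, if the superlevel set C* = {y : f(y) > t} satisfies ∫_{C*} f = 1 − α, then C* has minimal Lebesgue measure: for any measurable C with ∫_C f ≥ 1 − α, λ(C) ≥ λ(C*). -/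
open MeasureTheory ENNReal

/-- Neyman–Pearson-style optimality of density superlevel sets: if `f` is a probability
density, `t > 0`, and the superlevel set `C* = {y : f y > t}` captures exactly mass
`1 - α`, then among all measurable sets capturing mass at least `1 - α`, the set `C*`
has minimal Lebesgue measure. -/
theorem superlevel_set_minimal_measure (f : ℝ → ℝ) (hf_meas : Measurable f)
    (hf_nonneg : ∀ y, 0 ≤ f y) (hf_int : Integrable f)
    (hf_density : ∫ y, f y = 1) (t : ℝ) (ht : 0 < t) (α : ℝ)
    (hCstar : ∫ y in {y | f y > t}, f y = 1 - α) :
    ∀ C : Set ℝ, MeasurableSet C → (1 - α ≤ ∫ y in C, f y) →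
      volume {y | f y > t} ≤ volume C := by
  intro C hC hCmass
  set A : Set ℝ := {y | f y > t} with hA_def
  have hA : MeasurableSet A := measurableSet_lt measurable_const hf_meas
  set g : ℝ → ℝ≥0∞ := fun y => ENNReal.ofReal (f y) with hg_def
  have hg_meas : Measurable g := hf_meas.ennreal_ofReal
  -- convert set integrals to lintegrals
  have key : ∀ S : Set ℝ, ENNReal.ofReal (∫ y in S, f y) = ∫⁻ y in S, g y := by
    intro S
    exact ofReal_integral_eq_lintegral_ofReal (hf_int.restrict)
      (Filter.Eventually.of_forall fun y => hf_nonneg y)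
  -- total mass is 1
  have htotal : ∫⁻ y, g y = 1 := by
    have := key Set.univ
    simp only [Measure.restrict_univ] at this
    rw [hf_density] at this
    simpa using this.symm
  -- ∫⁻_A g ≤ ∫⁻_C g
  have hAC : ∫⁻ y in A, g y ≤ ∫⁻ y in C, g y := by
    rw [← key A, ← key C]
    exact ENNReal.ofReal_le_ofReal (hCstar ▸ hCmass)
  -- split over A ∩ C
  have hsplitA : ∫⁻ y in A, g y = (∫⁻ y in A ∩ C, g y) + ∫⁻ y in A \ C, g y := by
    rw [← lintegral_union (hA.diff hC) (Set.disjoint_sdiff_right.mono_left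
      Set.inter_subset_right), Set.inter_union_diff]
  have hsplitC : ∫⁻ y in C, g y = (∫⁻ y in A ∩ C, g y) + ∫⁻ y in C \ A, g y := by
    rw [← lintegral_union (hC.diff hA) (Set.disjoint_sdiff_right.mono_left
      Set.inter_subset_left), Set.inter_comm, Set.inter_union_diff]
  have hfin : ∫⁻ y in A ∩ C, g y ≠ ⊤ := by
    have h1 : ∫⁻ y in A ∩ C, g y ≤ ∫⁻ y, g y := setLIntegral_le_lintegral _ _
    rw [htotal] at h1
    exact ne_top_of_le_ne_top ENNReal.one_ne_top h1
  have hdiff : ∫⁻ y in A \ C, g y ≤ ∫⁻ y in C \ A, g y := by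
    have := hAC
    rw [hsplitA, hsplitC] at this
    exact (ENNReal.add_le_add_iff_left hfin).mp this
  -- pointwise bounds
  have hlow : ENNReal.ofReal t * volume (A \ C) ≤ ∫⁻ y in A \ C, g y := by
    have : ∫⁻ y in A \ C, ENNReal.ofReal t ≤ ∫⁻ y in A \ C, g y := by
      refine setLIntegral_mono hg_meas fun y hy => ?_
      exact ENNReal.ofReal_le_ofReal (le_of_lt hy.1)
    simpa [lintegral_const, mul_comm] using this
  have hhigh : ∫⁻ y in C \ A, g y ≤ ENNReal.ofReal t * volume (C \ A) := by
    have : ∫⁻ y in C \ A, g y ≤ ∫⁻ y in C \ A, ENNReal.ofReal t := by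
      refine setLIntegral_mono measurable_const fun y hy => ?_
      exact ENNReal.ofReal_le_ofReal (not_lt.mp hy.2)
    simpa [lintegral_const, mul_comm] using this
  have hmeas_le : volume (A \ C) ≤ volume (C \ A) := by
    have h := hlow.trans (hdiff.trans hhigh)
    exact (ENNReal.mul_le_mul_iff_right (by simp [ht]) ENNReal.ofReal_ne_top).mp h
  calc volume A = volume (A ∩ C) + volume (A \ C) := by
        rw [← measure_union (Set.disjoint_sdiff_right.mono_left Set.inter_subset_right)
          (hA.diff hC), Set.inter_union_diff]
    _ ≤ volume (A ∩ C) + volume (C \ A) := add_le_add_right hmeas_le _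
    _ = volume C := by
        rw [← measure_union (Set.disjoint_sdiff_right.mono_left Set.inter_subset_left)
          (hC.diff hA), Set.inter_comm, Set.inter_union_diff]
end

section
/- Let P = ⋃_{i=1}^m [a_i, b_i] ⊆ [0,1] with a_i < b_i < a_{i+1}, and let q > 0 satisfy q · λ(P) < 1 where λ(P) = Σ (b_i − a_i). Then there exists a piecewise-linear nonneg. function f on [0,1] with at most 4m + 2 knots such that ∫_0^1 f = 1 and {y ∈ [0,1] : f(y) > q} = ⋃_{i=1}^m (a_i, b_i) up to endpoints (closure equals P). -/
set_option maxHeartbeats 1000000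
open MeasureTheory

section SpiceTrap
set_option linter.unusedSectionVars false

noncomputable def trap (A B c H q y : ℝ) : ℝ :=
  max 0 (min H (q + c * min (y - A) (B - y)))

section TrapLemmas
variable {A B ε δ c H q : ℝ}
  (hAB : A < B) (hε : 0 < ε) (hδ : 0 < δ)
  (hq : 0 < q) (hc : 0 < c)
  (hcε : c * ε = q) (hcδ : c * δ = H - q) (h2δ : 2 * δ ≤ B - A)

lemma trap_nonneg (y : ℝ) : 0 ≤ trap A B c H q y := le_max_left _ _

lemma trap_cont : Continuous (trap A B c H q) := by
  unfold trap
  fun_prop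

include hδ hc hcδ in
lemma H_gt_q : q < H := by nlinarith

include hAB hε hδ hq hc hcε hcδ h2δ in
lemma trap_left {y : ℝ} (h1 : A - ε ≤ y) (h2 : y ≤ A + δ) :
    trap A B c H q y = q + c * (y - A) := by
  have hmin : min (y - A) (B - y) = y - A := by
    apply min_eq_left; nlinarith
  unfold trap
  rw [hmin]
  have h3 : q + c * (y - A) ≤ H := by nlinarith
  have h4 : (0:ℝ) ≤ q + c * (y - A) := by nlinarith
  rw [min_eq_right h3, max_eq_right h4]

include hAB hε hδ hq hc hcε hcδ h2δ in
lemma trap_right {y : ℝ} (h1 : B - δ ≤ y) (h2 : y ≤ B + ε) :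
    trap A B c H q y = q + c * (B - y) := by
  have hmin : min (y - A) (B - y) = B - y := by
    apply min_eq_right; nlinarith
  unfold trap
  rw [hmin]
  have h3 : q + c * (B - y) ≤ H := by nlinarith
  have h4 : (0:ℝ) ≤ q + c * (B - y) := by nlinarith
  rw [min_eq_right h3, max_eq_right h4]

include hδ hq hc hcδ in
lemma trap_top {y : ℝ} (h1 : A + δ ≤ y) (h2 : y ≤ B - δ) :
    trap A B c H q y = H := by
  have hmin : δ ≤ min (y - A) (B - y) := le_min (by linarith) (by linarith)
  unfold trap
  have h3 : H ≤ q + c * min (y - A) (B - y) := by nlinarith [mul_le_mul_of_nonneg_left hmin hc.le]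
  rw [min_eq_left h3, max_eq_right (by nlinarith)]

include hε hq hc hcε in
lemma trap_zero {y : ℝ} (h1 : y ≤ A - ε ∨ B + ε ≤ y) : trap A B c H q y = 0 := by
  have hmin : min (y - A) (B - y) ≤ -ε := by
    rcases h1 with h | h
    · exact le_trans (min_le_left _ _) (by linarith)
    · exact le_trans (min_le_right _ _) (by linarith)
  unfold trap
  have : q + c * min (y - A) (B - y) ≤ 0 := by nlinarith [mul_le_mul_of_nonneg_left hmin hc.le]
  rw [max_eq_left (le_trans (min_le_right _ _) this)]

include hq in
lemma trap_le_q {y : ℝ} (h1 : min (y - A) (B - y) ≤ 0) (hc' : 0 ≤ c) : trap A B c H q y ≤ q := by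
  unfold trap
  have : q + c * min (y - A) (B - y) ≤ q := by nlinarith
  exact max_le hq.le (le_trans (min_le_right _ _) this)

include hδ hq hc hcδ in
lemma trap_gt_q {y : ℝ} (h1 : A < y) (h2 : y < B) : q < trap A B c H q y := by
  have hmin : 0 < min (y - A) (B - y) := lt_min (by linarith) (by linarith)
  have hH : q < H := by nlinarith
  unfold trap
  have : q < q + c * min (y - A) (B - y) := by nlinarith
  exact lt_max_of_lt_right (lt_min hH this)

include hε hq hc hcε in
lemma trap_pos_imp {y : ℝ} (h : 0 < trap A B c H q y) : A - ε < y ∧ y < B + ε := by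
  by_contra hcon
  push_neg at hcon
  have h0 : y ≤ A - ε ∨ B + ε ≤ y := by
    by_cases h1 : A - ε < y
    · exact Or.inr (hcon h1)
    · exact Or.inl (le_of_not_gt h1)
  rw [trap_zero hε hq hc hcε h0] at h
  exact lt_irrefl 0 h

end TrapLemmas

lemma integral_affine (u v c d : ℝ) : (∫ y in u..v, (c*y + d)) = c*(v^2-u^2)/2 + d*(v-u) := by
  have h1 : (∫ y in u..v, (c*y + d)) = (∫ y in u..v, c*y) + (∫ y in u..v, d) :=
    intervalIntegral.integral_add ((continuous_const.mul continuous_id).intervalIntegrable u v)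
      ((continuous_const).intervalIntegrable u v)
  rw [h1, intervalIntegral.integral_const_mul, integral_id, intervalIntegral.integral_const,
    smul_eq_mul]
  ring

section TrapInt
variable {A B ε δ c H q : ℝ}
  (hAB : A < B) (hε : 0 < ε) (hδ : 0 < δ)
  (hq : 0 < q) (hc : 0 < c)
  (hcε : c * ε = q) (hcδ : c * δ = H - q) (h2δ : 2 * δ ≤ B - A)

include hAB hε hδ hq hc hcε hcδ h2δ in
lemma trap_integral (hA0 : 0 ≤ A) (hB1 : B ≤ 1) (hAd : A = 0 ∨ ε ≤ A) (hBd : B = 1 ∨ ε ≤ 1 - B) :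
    (∫ y in (0:ℝ)..1, trap A B c H q y)
      = H*(B-A) - (H-q)*δ + (if A = 0 then 0 else q*ε/2) + (if B = 1 then 0 else q*ε/2) := by
  have hint : ∀ u v : ℝ, IntervalIntegrable (trap A B c H q) MeasureTheory.volume u v :=
    fun u v => (trap_cont).intervalIntegrable u v
  obtain ⟨pL, hpL⟩ : ∃ pL : ℝ, pL = if A = 0 then 0 else A - ε := ⟨_, rfl⟩
  obtain ⟨pR, hpR⟩ : ∃ pR : ℝ, pR = if B = 1 then 1 else B + ε := ⟨_, rfl⟩
  have hpL0 : 0 ≤ pL := by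
    rcases hAd with h | h
    · simp [hpL, h]
    · rw [hpL, if_neg (by intro h0; rw [h0] at h; linarith)]; linarith
  have hpLA : pL ≤ A := by
    rw [hpL]; split <;> [linarith; linarith]
  have hpLε : A - ε ≤ pL := by
    rw [hpL]; split
    · rename_i h; rw [h]; linarith
    · exact le_refl _
  have hpRB : B ≤ pR := by
    rw [hpR]; split <;> [linarith; linarith]
  have hpR1 : pR ≤ 1 := by
    rcases hBd with h | h
    · simp [hpR, h]
    · rw [hpR, if_neg (by intro h0; rw [h0] at h; linarith)]; linarith
  have hpRε : pR ≤ B + ε := by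
    rw [hpR]; split
    · rename_i h; rw [h]; linarith
    · exact le_refl _
  have hAδ : A ≤ A + δ := by linarith
  have hδB : A + δ ≤ B - δ := by linarith
  -- the split
  have hsplit : (∫ y in (0:ℝ)..1, trap A B c H q y)
      = (∫ y in (0:ℝ)..pL, trap A B c H q y) + ((∫ y in pL..A, trap A B c H q y)
      + ((∫ y in A..(A+δ), trap A B c H q y) + ((∫ y in (A+δ)..(B-δ), trap A B c H q y)
      + ((∫ y in (B-δ)..B, trap A B c H q y) + ((∫ y in B..pR, trap A B c H q y)
      + (∫ y in pR..(1:ℝ), trap A B c H q y)))))) := by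
    rw [intervalIntegral.integral_add_adjacent_intervals (hint _ _) (hint _ _),
      intervalIntegral.integral_add_adjacent_intervals (hint _ _) (hint _ _),
      intervalIntegral.integral_add_adjacent_intervals (hint _ _) (hint _ _),
      intervalIntegral.integral_add_adjacent_intervals (hint _ _) (hint _ _),
      intervalIntegral.integral_add_adjacent_intervals (hint _ _) (hint _ _),
      intervalIntegral.integral_add_adjacent_intervals (hint _ _) (hint _ _)]
  have I1 : (∫ y in (0:ℝ)..pL, trap A B c H q y) = 0 := by
    by_cases hA : A = 0
    · rw [hpL, if_pos hA, intervalIntegral.integral_same]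
    · rw [hpL, if_neg hA]
      rw [intervalIntegral.integral_congr (g := fun _ => (0:ℝ))
        (fun y hy => by
          rw [Set.uIcc_of_le (by rw [hpL, if_neg hA] at hpL0; linarith)] at hy
          exact trap_zero hε hq hc hcε (Or.inl hy.2))]
      simp
  have I2 : (∫ y in pL..A, trap A B c H q y) = (if A = 0 then 0 else q*ε/2) := by
    by_cases hA : A = 0
    · rw [hpL, if_pos hA, if_pos hA, hA, intervalIntegral.integral_same]
    · rw [hpL, if_neg hA, if_neg hA]
      rw [intervalIntegral.integral_congr (g := fun y => c*y + (q - c*A))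
        (fun y hy => by
          rw [Set.uIcc_of_le (by linarith)] at hy
          rw [trap_left hAB hε hδ hq hc hcε hcδ h2δ hy.1 (by linarith [hy.2])]
          ring)]
      rw [integral_affine]
      linear_combination (-ε/2) * hcε
  have I3 : (∫ y in A..(A+δ), trap A B c H q y) = q*δ + (H-q)*δ/2 := by
    rw [intervalIntegral.integral_congr (g := fun y => c*y + (q - c*A))
      (fun y hy => by
        rw [Set.uIcc_of_le (by linarith)] at hy
        rw [trap_left hAB hε hδ hq hc hcε hcδ h2δ (by linarith [hy.1]) hy.2]
        ring)]
    rw [integral_affine]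
    linear_combination (δ/2) * hcδ
  have I4 : (∫ y in (A+δ)..(B-δ), trap A B c H q y) = H * (B - A - 2*δ) := by
    rw [intervalIntegral.integral_congr (g := fun _ => H)
      (fun y hy => by
        rw [Set.uIcc_of_le (by linarith)] at hy
        exact trap_top hδ hq hc hcδ hy.1 hy.2)]
    rw [intervalIntegral.integral_const, smul_eq_mul]
    ring
  have I5 : (∫ y in (B-δ)..B, trap A B c H q y) = q*δ + (H-q)*δ/2 := by
    rw [intervalIntegral.integral_congr (g := fun y => (-c)*y + (q + c*B))
      (fun y hy => by
        rw [Set.uIcc_of_le (by linarith)] at hy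
        rw [trap_right hAB hε hδ hq hc hcε hcδ h2δ hy.1 (by linarith [hy.2])]
        ring)]
    rw [integral_affine]
    linear_combination (δ/2) * hcδ
  have I6 : (∫ y in B..pR, trap A B c H q y) = (if B = 1 then 0 else q*ε/2) := by
    by_cases hB : B = 1
    · rw [hpR, if_pos hB, if_pos hB, hB, intervalIntegral.integral_same]
    · rw [hpR, if_neg hB, if_neg hB]
      rw [intervalIntegral.integral_congr (g := fun y => (-c)*y + (q + c*B))
        (fun y hy => by
          rw [Set.uIcc_of_le (by linarith)] at hy
          rw [trap_right hAB hε hδ hq hc hcε hcδ h2δ (by linarith [hy.1]) hy.2]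
          ring)]
      rw [integral_affine]
      linear_combination (-ε/2) * hcε
  have I7 : (∫ y in pR..(1:ℝ), trap A B c H q y) = 0 := by
    by_cases hB : B = 1
    · rw [hpR, if_pos hB, intervalIntegral.integral_same]
    · rw [hpR, if_neg hB]
      rw [intervalIntegral.integral_congr (g := fun _ => (0:ℝ))
        (fun y hy => by
          rw [Set.uIcc_of_le (by rw [hpR, if_neg hB] at hpR1; linarith)] at hy
          exact trap_zero hε hq hc hcε (Or.inr hy.1))]
      simp
  rw [hsplit, I1, I2, I3, I4, I5, I6, I7]
  ring

end TrapInt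

end SpiceTrap

/-- Expressiveness of SPICE-ND prediction sets: for any finite union
`P = ⋃ᵢ [aᵢ, bᵢ] ⊆ [0,1]` of disjoint closed intervals and any threshold `q > 0` with
`q · λ(P) < 1`, there is a nonnegative continuous piecewise-linear density `f` on `[0,1]`
with at most `4m + 2` knots whose superlevel set at level `q` has closure exactly `P`. -/
theorem spice_nd_expressiveness (m : ℕ) (hm : 0 < m) (a b : Fin m → ℝ)
    (ha0 : ∀ i, 0 ≤ a i) (hab : ∀ i, a i < b i) (hb1 : ∀ i, b i ≤ 1)
    (hsep : ∀ i : Fin m, ∀ h : (i : ℕ) + 1 < m, b i < a ⟨(i : ℕ) + 1, h⟩)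
    (q : ℝ) (hq : 0 < q) (hqP : q * (∑ i, (b i - a i)) < 1) :
    ∃ (K : ℕ) (t : Fin (K + 1) → ℝ) (f : ℝ → ℝ),
      K + 1 ≤ 4 * m + 2 ∧
      StrictMono t ∧ t 0 = 0 ∧ t (Fin.last K) = 1 ∧
      ContinuousOn f (Set.Icc 0 1) ∧
      (∀ y ∈ Set.Icc (0:ℝ) 1, 0 ≤ f y) ∧
      (∀ i : Fin K, ∃ c d : ℝ, ∀ y ∈ Set.Icc (t i.castSucc) (t i.succ), f y = c * y + d) ∧
      (∫ y in (0:ℝ)..1, f y) = 1 ∧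
      closure {y ∈ Set.Icc (0:ℝ) 1 | f y > q} = ⋃ i, Set.Icc (a i) (b i) := by

  classical
  have hm1 : m - 1 < m := by omega
  set I0 : Fin m := ⟨0, hm⟩ with hI0
  set Im : Fin m := ⟨m - 1, hm1⟩ with hIm
  have hl : ∀ i : Fin m, 0 < b i - a i := fun i => sub_pos.2 (hab i)
  set L : ℝ := ∑ i, (b i - a i) with hLdef
  have hL : 0 < L := Finset.sum_pos (fun i _ => hl i) ⟨I0, Finset.mem_univ _⟩
  have hqL : q * L < 1 := hqP
  have hqL0 : 0 < q * L := mul_pos hq hL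
  -- the scale parameter η
  obtain ⟨lB, hlB⟩ : ∃ x : ℝ, x = if a I0 = 0 then 1 else a I0 / (2*(b I0 - a I0)) := ⟨_, rfl⟩
  obtain ⟨rB, hrB⟩ : ∃ x : ℝ, x = if b Im = 1 then 1 else (1 - b Im) / (2*(b Im - a Im)) := ⟨_, rfl⟩
  obtain ⟨gB, hgB⟩ : ∃ x : ℝ, x = Finset.univ.inf' ⟨I0, Finset.mem_univ _⟩
      (fun i : Fin m => if h : (i:ℕ)+1 < m then
        (a ⟨(i:ℕ)+1,h⟩ - b i) / (2*((b i - a i) + (b ⟨(i:ℕ)+1,h⟩ - a ⟨(i:ℕ)+1,h⟩))) else 1) := ⟨_, rfl⟩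
  have hlB0 : 0 < lB := by
    rw [hlB]; split
    · norm_num
    · rename_i h
      exact div_pos (lt_of_le_of_ne (ha0 I0) (Ne.symm h)) (by linarith [hl I0])
  have hrB0 : 0 < rB := by
    rw [hrB]; split
    · norm_num
    · rename_i h
      exact div_pos (by cases lt_or_eq_of_le (hb1 Im) with
        | inl h' => linarith
        | inr h' => exact absurd h' h) (by linarith [hl Im])
  have hgB0 : 0 < gB := by
    rw [hgB]; apply (Finset.lt_inf'_iff _).2
    intro i _
    split
    · rename_i h
      exact div_pos (sub_pos.2 (hsep i h)) (by linarith [hl i, hl ⟨(i:ℕ)+1,h⟩])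
    · norm_num
  set η : ℝ := min (q*L/8) (min ((1-q*L)/(2*(q*L))) (min (1/4) (min lB (min rB gB)))) with hηdef
  have hη0 : 0 < η := by
    refine lt_min (by positivity) (lt_min ?_ (lt_min (by norm_num) (lt_min hlB0 (lt_min hrB0 hgB0))))
    exact div_pos (by linarith) (by linarith)
  have hη8 : η ≤ q*L/8 := min_le_left _ _
  have hηL : η ≤ (1-q*L)/(2*(q*L)) := le_trans (min_le_right _ _) (min_le_left _ _)
  have hη14 : η ≤ 1/4 := le_trans (min_le_right _ _) (le_trans (min_le_right _ _) (min_le_left _ _))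
  have hηlB : η ≤ lB := le_trans (min_le_right _ _) (le_trans (min_le_right _ _) (le_trans (min_le_right _ _) (min_le_left _ _)))
  have hηrB : η ≤ rB := le_trans (min_le_right _ _) (le_trans (min_le_right _ _) (le_trans (min_le_right _ _) (le_trans (min_le_right _ _) (min_le_left _ _))))
  have hηgB : η ≤ gB := le_trans (min_le_right _ _) (le_trans (min_le_right _ _) (le_trans (min_le_right _ _) (le_trans (min_le_right _ _) (min_le_right _ _))))
  -- wing widths
  have hε : ∀ i : Fin m, 0 < η * (b i - a i) := fun i => mul_pos hη0 (hl i)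
  have hdivmul : ∀ x y : ℝ, 0 < y → (x/(2*y))*y = x/2 := by
    intro x y hy; field_simp
  have hεa : a I0 ≠ 0 → η * (b I0 - a I0) ≤ a I0 / 2 := by
    intro h
    rw [hlB, if_neg h] at hηlB
    have h2 : 0 < 2*(b I0 - a I0) := by linarith [hl I0]
    calc η * (b I0 - a I0) ≤ (a I0 / (2*(b I0 - a I0))) * (b I0 - a I0) :=
          mul_le_mul_of_nonneg_right hηlB (hl I0).le
      _ = a I0 / 2 := hdivmul _ _ (hl I0)
  have hεb : b Im ≠ 1 → η * (b Im - a Im) ≤ (1 - b Im) / 2 := by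
    intro h
    rw [hrB, if_neg h] at hηrB
    calc η * (b Im - a Im) ≤ ((1 - b Im) / (2*(b Im - a Im))) * (b Im - a Im) :=
          mul_le_mul_of_nonneg_right hηrB (hl Im).le
      _ = (1 - b Im) / 2 := hdivmul _ _ (hl Im)
  have hgap : ∀ i : Fin m, ∀ h : (i:ℕ)+1 < m,
      η * (b i - a i) + η * (b ⟨(i:ℕ)+1,h⟩ - a ⟨(i:ℕ)+1,h⟩) ≤ (a ⟨(i:ℕ)+1,h⟩ - b i) / 2 := by
    intro i h
    have h1 : gB ≤ (a ⟨(i:ℕ)+1,h⟩ - b i) / (2*((b i - a i) + (b ⟨(i:ℕ)+1,h⟩ - a ⟨(i:ℕ)+1,h⟩))) := by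
      rw [hgB]
      have := Finset.inf'_le
        (fun i : Fin m => if h : (i:ℕ)+1 < m then
          (a ⟨(i:ℕ)+1,h⟩ - b i) / (2*((b i - a i) + (b ⟨(i:ℕ)+1,h⟩ - a ⟨(i:ℕ)+1,h⟩))) else 1)
        (Finset.mem_univ i)
      rwa [dif_pos h] at this
    have hsum : 0 < (b i - a i) + (b ⟨(i:ℕ)+1,h⟩ - a ⟨(i:ℕ)+1,h⟩) := by linarith [hl i, hl ⟨(i:ℕ)+1,h⟩]
    have h2 : η * ((b i - a i) + (b ⟨(i:ℕ)+1,h⟩ - a ⟨(i:ℕ)+1,h⟩)) ≤ (a ⟨(i:ℕ)+1,h⟩ - b i) / 2 := by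
      calc η * ((b i - a i) + (b ⟨(i:ℕ)+1,h⟩ - a ⟨(i:ℕ)+1,h⟩))
          ≤ ((a ⟨(i:ℕ)+1,h⟩ - b i) / (2*((b i - a i) + (b ⟨(i:ℕ)+1,h⟩ - a ⟨(i:ℕ)+1,h⟩)))) * ((b i - a i) + (b ⟨(i:ℕ)+1,h⟩ - a ⟨(i:ℕ)+1,h⟩)) :=
            mul_le_mul_of_nonneg_right (le_trans hηgB h1) hsum.le
        _ = (a ⟨(i:ℕ)+1,h⟩ - b i) / 2 := hdivmul _ _ hsum
    linarith [h2]
  -- consecutive separation and chain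
  have hstep : ∀ i : Fin m, ∀ h : (i:ℕ)+1 < m,
      b i + η * (b i - a i) ≤ a ⟨(i:ℕ)+1,h⟩ - η * (b ⟨(i:ℕ)+1,h⟩ - a ⟨(i:ℕ)+1,h⟩) := by
    intro i h
    have := hgap i h
    have hw : 0 < a ⟨(i:ℕ)+1,h⟩ - b i := sub_pos.2 (hsep i h)
    linarith
  have hchainN : ∀ n : ℕ, ∀ j i : Fin m, (i:ℕ) = (j:ℕ) + n + 1 →
      b j + η * (b j - a j) ≤ a i - η * (b i - a i) := by
    intro n
    induction n with
    | zero =>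
      intro j i hji
      have hj1 : (j:ℕ)+1 < m := by omega
      have : i = ⟨(j:ℕ)+1, hj1⟩ := by apply Fin.ext; simp [hji]
      rw [this]; exact hstep j hj1
    | succ n ih =>
      intro j i hji
      have hj1 : (j:ℕ)+1 < m := by omega
      set j' : Fin m := ⟨(j:ℕ)+1, hj1⟩ with hj'
      calc b j + η * (b j - a j) ≤ a j' - η * (b j' - a j') := hstep j hj1
        _ ≤ b j' + η * (b j' - a j') := by nlinarith [hl j', hε j']
        _ ≤ a i - η * (b i - a i) := ih j' i (by simp [hj']; omega)
  have hchain : ∀ j i : Fin m, (j:ℕ) < (i:ℕ) →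
      b j + η * (b j - a j) ≤ a i - η * (b i - a i) := by
    intro j i hji
    exact hchainN ((i:ℕ) - (j:ℕ) - 1) j i (by omega)
  -- a values are increasing-ish: a i ≥ 0 everywhere, and for i ≠ I0, wings fit
  have hDL : ∀ i : Fin m, a i = 0 ∨ η * (b i - a i) ≤ a i := by
    intro i
    by_cases h0 : (i:ℕ) = 0
    · have hiI0 : i = I0 := Fin.ext (by simp [hI0, h0])
      by_cases hA : a i = 0
      · exact Or.inl hA
      · right
        rw [hiI0]
        have := hεa (by rwa [← hiI0])
        linarith [ha0 I0]
    · right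
      have hj1 : (⟨(i:ℕ)-1, by omega⟩ : Fin m) = ⟨(i:ℕ)-1, by omega⟩ := rfl
      set j : Fin m := ⟨(i:ℕ)-1, by omega⟩ with hjdef
      have := hchain j i (by simp [hjdef]; omega)
      have h1 : 0 ≤ b j := le_trans (ha0 j) (hab j).le
      have h2 : 0 < η * (b j - a j) := hε j
      linarith
  have hDR : ∀ i : Fin m, b i = 1 ∨ η * (b i - a i) ≤ 1 - b i := by
    intro i
    by_cases h0 : (i:ℕ) = m - 1
    · have hiIm : i = Im := Fin.ext (by simp [hIm, h0])
      by_cases hB : b i = 1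
      · exact Or.inl hB
      · right
        rw [hiIm]
        have := hεb (by rwa [← hiIm])
        have : (1 - b Im) / 2 ≤ 1 - b Im := by
          have hb : b Im ≤ 1 := hb1 Im
          have hbne : b Im ≠ 1 := by rwa [← hiIm]
          have : b Im < 1 := lt_of_le_of_ne hb hbne
          linarith
        linarith [hεb (by rwa [← hiIm])]
    · right
      have hl1 : (i:ℕ)+1 < m := by omega
      set j : Fin m := ⟨(i:ℕ)+1, hl1⟩ with hjdef
      have h1 := hstep i hl1
      have h2 : a j < b j := hab j
      have h3 : b j ≤ 1 := hb1 j
      have h4 : 0 < η * (b j - a j) := hε j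
      linarith

  -- choose the plateau parameter ρ by the intermediate value theorem
  obtain ⟨C0, hC0def⟩ : ∃ x : ℝ, x = ∑ i, ((if a i = 0 then 0 else q*(η*(b i - a i))/2)
      + (if b i = 1 then 0 else q*(η*(b i - a i))/2)) := ⟨_, rfl⟩
  have hC0nn : 0 ≤ C0 := by
    rw [hC0def]
    apply Finset.sum_nonneg
    intro i _
    have hqε : 0 < q*(η*(b i - a i)) := mul_pos hq (hε i)
    have h1 : (0:ℝ) ≤ (if a i = 0 then 0 else q*(η*(b i - a i))/2) := by
      split <;> linarith
    have h2 : (0:ℝ) ≤ (if b i = 1 then 0 else q*(η*(b i - a i))/2) := by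
      split <;> linarith
    linarith
  have hC0ub : C0 ≤ q*η*L := by
    rw [hC0def, hLdef, Finset.mul_sum]
    apply Finset.sum_le_sum
    intro i _
    have hqε : 0 < q*(η*(b i - a i)) := mul_pos hq (hε i)
    have h1 : (if a i = 0 then (0:ℝ) else q*(η*(b i - a i))/2) ≤ q*(η*(b i - a i))/2 := by
      split <;> linarith
    have h2 : (if b i = 1 then (0:ℝ) else q*(η*(b i - a i))/2) ≤ q*(η*(b i - a i))/2 := by
      split <;> linarith
    have : q * η * (b i - a i) = q*(η*(b i - a i)) := by ring
    linarith
  obtain ⟨G, hGdef⟩ : ∃ G : ℝ → ℝ, G = fun x => q*(1+x)*L - q*x^2*η*L + C0 := ⟨_, rfl⟩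
  have hGcont : ContinuousOn G (Set.Icc 0 (1/(4*η))) := by
    rw [hGdef]; fun_prop
  have hG0 : G 0 < 1 := by
    rw [hGdef]
    simp only []
    have h1 : q*η*L ≤ (1-q*L)/2 := by
      have := mul_le_mul_of_nonneg_right hηL hqL0.le
      calc q*η*L = η * (q*L) := by ring
        _ ≤ ((1-q*L)/(2*(q*L))) * (q*L) := mul_le_mul_of_nonneg_right hηL hqL0.le
        _ = (1-q*L)/2 := hdivmul _ _ hqL0
    nlinarith
  have hρ₁0 : (0:ℝ) ≤ 1/(4*η) := by positivity
  have hG1 : 1 ≤ G (1/(4*η)) := by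
    rw [hGdef]
    simp only []
    have hη' : η ≠ 0 := ne_of_gt hη0
    have e1 : q*(1+1/(4*η))*L = q*L + q*L/(4*η) := by field_simp
    have e2 : q*(1/(4*η))^2*η*L = q*L/(16*η) := by field_simp; ring
    rw [e1, e2]
    have h3 : 8*η ≤ q*L := by linarith [hη8]
    have h4 : q*L/(4*η) - q*L/(16*η) = 3*(q*L)/(16*η) := by field_simp; ring
    have h5 : 1 ≤ 3*(q*L)/(16*η) := by
      rw [le_div_iff₀ (by positivity)]
      nlinarith
    linarith
  obtain ⟨ρ, hρIcc, hGρ⟩ := intermediate_value_Icc hρ₁0 hGcont ⟨hG0.le, hG1⟩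
  have hρnn : 0 ≤ ρ := hρIcc.1
  have hρ0 : 0 < ρ := by
    rcases lt_or_eq_of_le hρnn with h | h
    · exact h
    · exfalso; rw [← h] at hGρ; rw [hGρ] at hG0; exact lt_irrefl 1 hG0
  have hρη : ρ * η ≤ 1/4 := by
    have := hρIcc.2
    calc ρ * η ≤ (1/(4*η)) * η := mul_le_mul_of_nonneg_right hρIcc.2 hη0.le
      _ = 1/4 := by field_simp
  -- per-interval parameters for trap lemmas
  have hδp : ∀ i : Fin m, 0 < ρ * (η * (b i - a i)) := fun i => mul_pos hρ0 (hε i)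
  have hcp : ∀ i : Fin m, 0 < q / (η * (b i - a i)) := fun i => div_pos hq (hε i)
  have hcε : ∀ i : Fin m, q / (η * (b i - a i)) * (η * (b i - a i)) = q :=
    fun i => div_mul_cancel₀ q (ne_of_gt (hε i))
  have hcδ : ∀ i : Fin m, q / (η * (b i - a i)) * (ρ * (η * (b i - a i))) = q*(1+ρ) - q := by
    intro i
    have h := hε i
    rw [mul_left_comm (q / (η * (b i - a i))), hcε i]
    ring
  have h2δ : ∀ i : Fin m, 2 * (ρ * (η * (b i - a i))) ≤ b i - a i := by
    intro i
    have h := hl i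
    nlinarith [hρη, hρ0, hη0]
  have h2δs : ∀ i : Fin m, 2 * (ρ * (η * (b i - a i))) < b i - a i := by
    intro i
    have h := hl i
    nlinarith [hρη, hρ0, hη0]

  -- the density function
  obtain ⟨f, hfdef⟩ : ∃ f : ℝ → ℝ, f = fun y =>
      ∑ i, trap (a i) (b i) (q / (η * (b i - a i))) (q*(1+ρ)) q y := ⟨_, rfl⟩
  have hfcont : Continuous f := by
    rw [hfdef]; exact continuous_finset_sum _ fun i _ => trap_cont
  have hfnn : ∀ y : ℝ, 0 ≤ f y := by
    intro y; simp only [hfdef]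
    exact Finset.sum_nonneg fun i _ => trap_nonneg y
  have hfge : ∀ (i : Fin m) (y : ℝ), trap (a i) (b i) (q / (η * (b i - a i))) (q*(1+ρ)) q y ≤ f y := by
    intro i y
    simp only [hfdef]
    exact Finset.single_le_sum (f := fun j => trap (a j) (b j) (q / (η * (b j - a j))) (q*(1+ρ)) q y) (fun j _ => trap_nonneg y) (Finset.mem_univ i)
  have hvanish : ∀ (i j : Fin m) (y : ℝ), a i - η * (b i - a i) ≤ y → y ≤ b i + η * (b i - a i) →
      j ≠ i → trap (a j) (b j) (q / (η * (b j - a j))) (q*(1+ρ)) q y = 0 := by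
    intro i j y hy1 hy2 hji
    rcases lt_or_gt_of_ne (fun h : (j:ℕ) = (i:ℕ) => hji (Fin.ext h)) with h | h
    · have := hchain j i h
      exact trap_zero (hε j) hq (hcp j) (hcε j) (Or.inr (by linarith))
    · have := hchain i j h
      have haibi : a i - η * (b i - a i) ≤ b i + η * (b i - a i) := by
        have := hl i; have := hε i; linarith
      exact trap_zero (hε j) hq (hcp j) (hcε j) (Or.inl (by linarith))
  have hfeq : ∀ (i : Fin m) (y : ℝ), a i - η * (b i - a i) ≤ y → y ≤ b i + η * (b i - a i) →
      f y = trap (a i) (b i) (q / (η * (b i - a i))) (q*(1+ρ)) q y := by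
    intro i y hy1 hy2
    simp only [hfdef]
    exact Finset.sum_eq_single i (fun j _ hji => hvanish i j y hy1 hy2 hji)
      (fun h => absurd (Finset.mem_univ i) h)
  have hfzero : ∀ y : ℝ, (∀ j : Fin m, y ≤ a j - η * (b j - a j) ∨ b j + η * (b j - a j) ≤ y) →
      f y = 0 := by
    intro y hy
    simp only [hfdef]
    exact Finset.sum_eq_zero fun j _ => trap_zero (hε j) hq (hcp j) (hcε j) (hy j)
  -- superlevel set
  have hsup : {y | y ∈ Set.Icc (0:ℝ) 1 ∧ f y > q} = ⋃ i, Set.Ioo (a i) (b i) := by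
    ext y
    simp only [Set.mem_setOf_eq, Set.mem_iUnion, Set.mem_Ioo, Set.mem_Icc]
    constructor
    · rintro ⟨⟨hy0, hy1⟩, hfy⟩
      by_contra hcon
      push_neg at hcon
      have hex : ∃ j : Fin m, trap (a j) (b j) (q / (η * (b j - a j))) (q*(1+ρ)) q y ≠ 0 := by
        by_contra hall
        push_neg at hall
        simp only [hfdef] at hfy
        rw [Finset.sum_eq_zero (fun j _ => hall j)] at hfy
        linarith
      obtain ⟨j, hj⟩ := hex
      have hpos : 0 < trap (a j) (b j) (q / (η * (b j - a j))) (q*(1+ρ)) q y :=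
        lt_of_le_of_ne (trap_nonneg y) (Ne.symm hj)
      obtain ⟨hj1, hj2⟩ := trap_pos_imp (hε j) hq (hcp j) (hcε j) hpos
      have hfy2 : f y = trap (a j) (b j) (q / (η * (b j - a j))) (q*(1+ρ)) q y :=
        hfeq j y hj1.le hj2.le
      have hmin : min (y - a j) (b j - y) ≤ 0 := by
        rcases le_or_gt y (a j) with h | h
        · exact le_trans (min_le_left _ _) (by linarith)
        · have := hcon j h
          exact le_trans (min_le_right _ _) (by linarith)
      have := trap_le_q (A := a j) (B := b j) (H := q*(1+ρ)) hq hmin (hcp j).le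
      rw [hfy2] at hfy
      linarith
    · rintro ⟨i, hi1, hi2⟩
      have h1 : q < trap (a i) (b i) (q / (η * (b i - a i))) (q*(1+ρ)) q y :=
        trap_gt_q (hδp i) hq (hcp i) (hcδ i) hi1 hi2
      refine ⟨⟨le_trans (ha0 i) hi1.le, le_trans hi2.le (hb1 i)⟩, lt_of_lt_of_le h1 (hfge i y)⟩
  have hclos : closure {y | y ∈ Set.Icc (0:ℝ) 1 ∧ f y > q} = ⋃ i, Set.Icc (a i) (b i) := by
    rw [hsup]
    apply Set.Subset.antisymm
    · exact closure_minimal (Set.iUnion_mono fun i => Set.Ioo_subset_Icc_self)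
        (isClosed_iUnion_of_finite fun i => isClosed_Icc)
    · refine Set.iUnion_subset fun i => ?_
      rw [← closure_Ioo (ne_of_lt (hab i))]
      exact closure_mono (Set.subset_iUnion (fun i => Set.Ioo (a i) (b i)) i)
  -- the integral
  have hint1 : (∫ y in (0:ℝ)..1, f y) = ∑ i, ∫ y in (0:ℝ)..1,
      trap (a i) (b i) (q / (η * (b i - a i))) (q*(1+ρ)) q y := by
    simp only [hfdef]
    exact intervalIntegral.integral_finset_sum (fun i _ => (trap_cont).intervalIntegrable 0 1)
  have hint2 : ∀ i : Fin m, (∫ y in (0:ℝ)..1,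
      trap (a i) (b i) (q / (η * (b i - a i))) (q*(1+ρ)) q y)
      = q*(1+ρ)*(b i - a i) - (q*(1+ρ) - q)*(ρ*(η*(b i - a i)))
        + (if a i = 0 then 0 else q*(η*(b i - a i))/2)
        + (if b i = 1 then 0 else q*(η*(b i - a i))/2) := by
    intro i
    exact trap_integral (hab i) (hε i) (hδp i) hq (hcp i) (hcε i) (hcδ i) (h2δ i)
      (ha0 i) (hb1 i) (hDL i) (hDR i)
  have hint3 : (∫ y in (0:ℝ)..1, f y) = 1 := by
    rw [hint1, Finset.sum_congr rfl (fun i _ => hint2 i)]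
    have hterm : ∀ i : Fin m,
        q*(1+ρ)*(b i - a i) - (q*(1+ρ) - q)*(ρ*(η*(b i - a i)))
          + (if a i = 0 then 0 else q*(η*(b i - a i))/2)
          + (if b i = 1 then 0 else q*(η*(b i - a i))/2)
        = (q*(1+ρ) - q*ρ^2*η)*(b i - a i)
          + ((if a i = 0 then 0 else q*(η*(b i - a i))/2)
           + (if b i = 1 then 0 else q*(η*(b i - a i))/2)) := by
      intro i; ring
    rw [Finset.sum_congr rfl (fun i _ => hterm i), Finset.sum_add_distrib, ← Finset.mul_sum,
      ← hC0def, ← hLdef]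
    rw [hGdef] at hGρ
    simp only [] at hGρ
    linarith [hGρ]

  -- helper affine-region lemmas for f
  have hF1 : ∀ (i : Fin m) (y : ℝ), a i - η*(b i - a i) ≤ y → y ≤ a i + ρ*(η*(b i - a i)) →
      f y = (q/(η*(b i - a i)))*y + (q - (q/(η*(b i - a i)))*(a i)) := by
    intro i y h1 h2
    have hup : y ≤ b i + η*(b i - a i) := by
      have := h2δ i; have := hε i; have := hδp i; have := hl i; linarith
    rw [hfeq i y h1 hup,
      trap_left (hab i) (hε i) (hδp i) hq (hcp i) (hcε i) (hcδ i) (h2δ i) h1 h2]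
    ring
  have hF2 : ∀ (i : Fin m) (y : ℝ), a i + ρ*(η*(b i - a i)) ≤ y → y ≤ b i - ρ*(η*(b i - a i)) →
      f y = 0*y + q*(1+ρ) := by
    intro i y h1 h2
    have hlo : a i - η*(b i - a i) ≤ y := by have := hε i; have := hδp i; linarith
    have hup : y ≤ b i + η*(b i - a i) := by have := hε i; have := hδp i; linarith
    rw [hfeq i y hlo hup, trap_top (hδp i) hq (hcp i) (hcδ i) h1 h2]
    ring
  have hF3 : ∀ (i : Fin m) (y : ℝ), b i - ρ*(η*(b i - a i)) ≤ y → y ≤ b i + η*(b i - a i) →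
      f y = (-(q/(η*(b i - a i))))*y + (q + (q/(η*(b i - a i)))*(b i)) := by
    intro i y h1 h2
    have hlo : a i - η*(b i - a i) ≤ y := by
      have := h2δ i; have := hε i; have := hδp i; have := hl i; linarith
    rw [hfeq i y hlo h2,
      trap_right (hab i) (hε i) (hδp i) hq (hcp i) (hcε i) (hcδ i) (h2δ i) h1 h2]
    ring
  -- knot sequence
  obtain ⟨aN, haNdef⟩ : ∃ g : ℕ → ℝ, g = fun n => if h : n < m then a ⟨n, h⟩ else 0 := ⟨_, rfl⟩
  obtain ⟨bN, hbNdef⟩ : ∃ g : ℕ → ℝ, g = fun n => if h : n < m then b ⟨n, h⟩ else 0 := ⟨_, rfl⟩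
  have haN : ∀ (i : ℕ) (hi : i < m), aN i = a ⟨i, hi⟩ := by
    intro i hi; rw [haNdef]; simp [hi]
  have hbN : ∀ (i : ℕ) (hi : i < m), bN i = b ⟨i, hi⟩ := by
    intro i hi; rw [hbNdef]; simp [hi]
  obtain ⟨u, hudef⟩ : ∃ u : ℕ → ℝ, u = fun j =>
      if j = 0 then 0 else if 4*m+1 ≤ j then 1 else
      (if (j-1) % 4 = 0 then
         (if (j-1)/4 = 0 ∧ aN ((j-1)/4) = 0 then ρ*(η*(bN ((j-1)/4) - aN ((j-1)/4)))/2
          else aN ((j-1)/4) - η*(bN ((j-1)/4) - aN ((j-1)/4)))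
       else if (j-1) % 4 = 1 then aN ((j-1)/4) + ρ*(η*(bN ((j-1)/4) - aN ((j-1)/4)))
       else if (j-1) % 4 = 2 then bN ((j-1)/4) - ρ*(η*(bN ((j-1)/4) - aN ((j-1)/4)))
       else (if (j-1)/4 = m-1 ∧ bN ((j-1)/4) = 1 then
              (bN ((j-1)/4) - ρ*(η*(bN ((j-1)/4) - aN ((j-1)/4))) + 1)/2
             else bN ((j-1)/4) + η*(bN ((j-1)/4) - aN ((j-1)/4)))) := ⟨_, rfl⟩
  have hu0 : u 0 = 0 := by rw [hudef]; norm_num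
  have huLast : ∀ j, 4*m+1 ≤ j → u j = 1 := by
    intro j hj; rw [hudef]; simp only []
    rw [if_neg (by omega), if_pos hj]
  have hu1 : ∀ (i : ℕ) (hi : i < m), u (4*i+1) =
      if i = 0 ∧ a ⟨i,hi⟩ = 0 then ρ*(η*(b ⟨i,hi⟩ - a ⟨i,hi⟩))/2
      else a ⟨i,hi⟩ - η*(b ⟨i,hi⟩ - a ⟨i,hi⟩) := by
    intro i hi
    have e2 : (4*i+1-1)/4 = i := by omega
    have e3 : (4*i+1-1) % 4 = 0 := by omega
    rw [hudef]; simp only []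
    rw [if_neg (by omega : ¬(4*i+1 = 0)), if_neg (by omega : ¬(4*m+1 ≤ 4*i+1))]
    simp only [e2, e3, haN i hi, hbN i hi]
    norm_num
  have hu2 : ∀ (i : ℕ) (hi : i < m), u (4*i+2) =
      a ⟨i,hi⟩ + ρ*(η*(b ⟨i,hi⟩ - a ⟨i,hi⟩)) := by
    intro i hi
    have e2 : (4*i+2-1)/4 = i := by omega
    have e3 : (4*i+2-1) % 4 = 1 := by omega
    rw [hudef]; simp only []
    rw [if_neg (by omega : ¬(4*i+2 = 0)), if_neg (by omega : ¬(4*m+1 ≤ 4*i+2))]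
    simp only [e2, e3, haN i hi, hbN i hi]
    norm_num
  have hu3 : ∀ (i : ℕ) (hi : i < m), u (4*i+3) =
      b ⟨i,hi⟩ - ρ*(η*(b ⟨i,hi⟩ - a ⟨i,hi⟩)) := by
    intro i hi
    have e2 : (4*i+3-1)/4 = i := by omega
    have e3 : (4*i+3-1) % 4 = 2 := by omega
    rw [hudef]; simp only []
    rw [if_neg (by omega : ¬(4*i+3 = 0)), if_neg (by omega : ¬(4*m+1 ≤ 4*i+3))]
    simp only [e2, e3, haN i hi, hbN i hi]
    norm_num
  have hu4 : ∀ (i : ℕ) (hi : i < m), i + 1 < m ∨ i = m-1 → u (4*i+4) =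
      if i = m-1 ∧ b ⟨i,hi⟩ = 1 then (b ⟨i,hi⟩ - ρ*(η*(b ⟨i,hi⟩ - a ⟨i,hi⟩)) + 1)/2
      else b ⟨i,hi⟩ + η*(b ⟨i,hi⟩ - a ⟨i,hi⟩) := by
    intro i hi _
    have e2 : (4*i+4-1)/4 = i := by omega
    have e3 : (4*i+4-1) % 4 = 3 := by omega
    rw [hudef]; simp only []
    rw [if_neg (by omega : ¬(4*i+4 = 0)), if_neg (by omega : ¬(4*m+1 ≤ 4*i+4))]
    simp only [e2, e3, haN i hi, hbN i hi]
    norm_num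
  -- strict monotonicity of adjacent knots
  have humono : ∀ n : ℕ, n < 4*m+1 → u n < u (n+1) := by
    intro n hn
    by_cases hn0 : n = 0
    · subst hn0
      rw [hu0]
      have h01 : (0:ℕ)+1 = 4*0+1 := by norm_num
      rw [show (0:ℕ)+1 = 4*0+1 from rfl, hu1 0 hm]
      by_cases hc : (0:ℕ) = 0 ∧ a ⟨0,hm⟩ = 0
      · rw [if_pos hc]
        have := hδp I0
        have : 0 < ρ*(η*(b ⟨0,hm⟩ - a ⟨0,hm⟩)) := hδp ⟨0,hm⟩
        linarith
      · rw [if_neg hc]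
        have hA0 : a ⟨0,hm⟩ ≠ 0 := by
          intro h; exact hc ⟨rfl, h⟩
        have h1 := hεa hA0
        have h2 : 0 < a I0 := lt_of_le_of_ne (ha0 I0) (Ne.symm hA0)
        have : a I0 - η*(b I0 - a I0) ≥ a I0 / 2 := by linarith
        have : (0:ℝ) < a I0 - η*(b I0 - a I0) := by linarith
        exact this
    · obtain ⟨i, r, hr4, hnir, hi⟩ : ∃ i r : ℕ, r < 4 ∧ n = 4*i+r+1 ∧ i < m := by
        refine ⟨(n-1)/4, (n-1) % 4, by omega, by omega, by omega⟩
      have hr0123 : r = 0 ∨ r = 1 ∨ r = 2 ∨ r = 3 := by omega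
      subst hnir
      rcases hr0123 with h | h | h | h <;> subst h
      · -- from x' to y
        rw [show 4*i+0+1 = 4*i+1 from rfl, show 4*i+0+1+1 = 4*i+2 from rfl,
          hu1 i hi, hu2 i hi]
        have hd := hδp ⟨i,hi⟩
        have he := hε ⟨i,hi⟩
        by_cases hc : i = 0 ∧ a ⟨i,hi⟩ = 0
        · rw [if_pos hc]; linarith [hc.2, hd]
        · rw [if_neg hc]; linarith
      · -- from y to z
        rw [show 4*i+1+1 = 4*i+2 from rfl, show 4*i+1+1+1 = 4*i+3 from rfl,
          hu2 i hi, hu3 i hi]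
        have := h2δs ⟨i,hi⟩
        linarith
      · -- from z to x
        rw [show 4*i+2+1 = 4*i+3 from rfl, show 4*i+2+1+1 = 4*i+4 from rfl,
          hu3 i hi, hu4 i hi (by omega)]
        have hd := hδp ⟨i,hi⟩
        have he := hε ⟨i,hi⟩
        have hb := hb1 ⟨i,hi⟩
        by_cases hc : i = m-1 ∧ b ⟨i,hi⟩ = 1
        · rw [if_pos hc]; linarith [hc.2, hd, hb]
        · rw [if_neg hc]; linarith
      · -- from x to next x' (or to 1)
        rw [show 4*i+3+1 = 4*i+4 from rfl, hu4 i hi (by omega)]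
        by_cases hlast : i = m-1
        · -- next knot is 1
          have h41 : 4*m+1 ≤ 4*i+4+1 := by omega
          rw [huLast _ h41]
          have hd := hδp ⟨i,hi⟩
          have he := hε ⟨i,hi⟩
          have hb := hb1 ⟨i,hi⟩
          by_cases hc : i = m-1 ∧ b ⟨i,hi⟩ = 1
          · rw [if_pos hc]; linarith [hc.2, hd, hb]
          · rw [if_neg hc]
            have hbne : b ⟨i,hi⟩ ≠ 1 := by
              intro hbe; exact hc ⟨hlast, hbe⟩
            have hIm : (⟨i,hi⟩ : Fin m) = Im := Fin.ext (by simp [hIm, hlast])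
            have := hεb (by rwa [← hIm])
            rw [← hIm] at this
            have hblt : b ⟨i,hi⟩ < 1 := lt_of_le_of_ne hb hbne
            linarith
        · -- next knot is the left wing of interval i+1
          have hi1 : i+1 < m := by omega
          rw [show 4*i+4+1 = 4*(i+1)+1 from by ring, hu1 (i+1) hi1]
          rw [if_neg (by omega : ¬(i = m-1 ∧ b ⟨i,hi⟩ = 1)),
            if_neg (by omega : ¬(i+1 = 0 ∧ a ⟨i+1,hi1⟩ = 0))]
          have hg := hgap ⟨i,hi⟩ (by simpa using hi1)
          have hs := hsep ⟨i,hi⟩ (by simpa using hi1)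
          have : (⟨(⟨i,hi⟩ : Fin m)+1, by simpa using hi1⟩ : Fin m) = ⟨i+1, hi1⟩ := rfl
          simp only [] at hg hs
          linarith [hg, hs]

  -- assemble the answer
  refine ⟨4*m+1, fun j => u (j : ℕ), f, by omega, ?_, ?_, ?_,
    hfcont.continuousOn, fun y _ => hfnn y, ?_, hint3, hclos⟩
  · -- strict monotonicity
    rw [Fin.strictMono_iff_lt_succ]
    intro j
    simp only [Fin.coe_castSucc, Fin.val_succ]
    exact humono j.val j.isLt
  · -- t 0 = 0
    exact hu0
  · -- t last = 1
    simp only [Fin.val_last]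
    exact huLast _ le_rfl
  · -- piecewise affine
    intro jf
    simp only [Fin.coe_castSucc, Fin.val_succ]
    obtain ⟨n, hn⟩ : ∃ n : ℕ, n = (jf : ℕ) := ⟨_, rfl⟩
    have hnlt : n < 4*m+1 := hn ▸ jf.isLt
    rw [← hn]
    by_cases hn0 : n = 0
    · subst hn0
      rw [hu0, show (0:ℕ)+1 = 4*0+1 from rfl, hu1 0 hm]
      by_cases hc : (0:ℕ) = 0 ∧ a ⟨0,hm⟩ = 0
      · refine ⟨q/(η*(b I0 - a I0)), q - (q/(η*(b I0 - a I0)))*(a I0), ?_⟩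
        rw [if_pos hc]
        intro y hy
        refine hF1 I0 y ?_ ?_
        · have := hε I0
          have ha00 : a I0 = 0 := hc.2
          have : (0:ℝ) ≤ y := hy.1
          linarith
        · have := hy.2
          have hd := hδp I0
          have ha00 : a I0 = 0 := hc.2
          have heq : (⟨0,hm⟩ : Fin m) = I0 := rfl
          rw [heq] at this
          linarith
      · refine ⟨0, 0, ?_⟩
        rw [if_neg hc]
        intro y hy
        rw [hfzero y ?_]
        · ring
        · intro j
          by_cases hj0 : (j:ℕ) = 0
          · left
            have : j = I0 := Fin.ext (by simp [hI0, hj0])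
            rw [this]
            exact hy.2
          · left
            have hch := hchain I0 j (by show 0 < (j:ℕ); omega)
            have h1 : a I0 - η*(b I0 - a I0) ≤ b I0 + η*(b I0 - a I0) := by
              have := hl I0; have := hε I0; linarith
            have := hy.2
            linarith
    · obtain ⟨i, r, hr4, hnir, hi⟩ : ∃ i r : ℕ, r < 4 ∧ n = 4*i+r+1 ∧ i < m := by
        refine ⟨(n-1)/4, (n-1) % 4, by omega, by omega, by omega⟩
      have hr0123 : r = 0 ∨ r = 1 ∨ r = 2 ∨ r = 3 := by omega
      subst hnir
      rcases hr0123 with h | h | h | h <;> subst h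
      · -- wing-up piece [x'_i, y_i]
        rw [show 4*i+0+1 = 4*i+1 from rfl, show 4*i+0+1+1 = 4*i+2 from rfl,
          hu1 i hi, hu2 i hi]
        refine ⟨q/(η*(b ⟨i,hi⟩ - a ⟨i,hi⟩)), q - (q/(η*(b ⟨i,hi⟩ - a ⟨i,hi⟩)))*(a ⟨i,hi⟩), ?_⟩
        intro y hy
        refine hF1 ⟨i,hi⟩ y ?_ hy.2
        rcases hy with ⟨hy1, hy2⟩
        by_cases hc : i = 0 ∧ a ⟨i,hi⟩ = 0
        · rw [if_pos hc] at hy1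
          have hd := hδp ⟨i,hi⟩
          have he := hε ⟨i,hi⟩
          have ha00 := hc.2
          linarith
        · rw [if_neg hc] at hy1
          exact hy1
      · -- plateau piece [y_i, z_i]
        rw [show 4*i+1+1 = 4*i+2 from rfl, show 4*i+1+1+1 = 4*i+3 from rfl,
          hu2 i hi, hu3 i hi]
        exact ⟨0, q*(1+ρ), fun y hy => hF2 ⟨i,hi⟩ y hy.1 hy.2⟩
      · -- wing-down piece [z_i, x_i]
        rw [show 4*i+2+1 = 4*i+3 from rfl, show 4*i+2+1+1 = 4*i+4 from rfl,
          hu3 i hi, hu4 i hi (by omega)]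
        refine ⟨-(q/(η*(b ⟨i,hi⟩ - a ⟨i,hi⟩))), q + (q/(η*(b ⟨i,hi⟩ - a ⟨i,hi⟩)))*(b ⟨i,hi⟩), ?_⟩
        intro y hy
        refine hF3 ⟨i,hi⟩ y hy.1 ?_
        rcases hy with ⟨hy1, hy2⟩
        by_cases hc : i = m-1 ∧ b ⟨i,hi⟩ = 1
        · rw [if_pos hc] at hy2
          have hd := hδp ⟨i,hi⟩
          have he := hε ⟨i,hi⟩
          linarith [hc.2]
        · rw [if_neg hc] at hy2
          exact hy2
      · -- gap piece [x_i, x'_{i+1}] or last piece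
        rw [show 4*i+3+1 = 4*i+4 from rfl, hu4 i hi (by omega)]
        by_cases hlast : i = m-1
        · have h41 : 4*m+1 ≤ 4*i+4+1 := by omega
          rw [huLast _ h41]
          by_cases hc : i = m-1 ∧ b ⟨i,hi⟩ = 1
          · -- final descent piece, b_m = 1
            refine ⟨-(q/(η*(b ⟨i,hi⟩ - a ⟨i,hi⟩))), q + (q/(η*(b ⟨i,hi⟩ - a ⟨i,hi⟩)))*(b ⟨i,hi⟩), ?_⟩
            rw [if_pos hc]
            intro y hy
            refine hF3 ⟨i,hi⟩ y ?_ ?_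
            · have hd := hδp ⟨i,hi⟩
              have hbe := hc.2
              have := hy.1
              linarith
            · have he := hε ⟨i,hi⟩
              have hbe := hc.2
              have := hy.2
              linarith
          · -- zero piece [b_m + ε_m, 1]
            refine ⟨0, 0, ?_⟩
            rw [if_neg hc]
            intro y hy
            rw [hfzero y ?_]
            · ring
            · intro j
              right
              have hji : (j:ℕ) ≤ i := by omega
              rcases lt_or_eq_of_le hji with hjlt | hjeq
              · have hch := hchain j ⟨i,hi⟩ hjlt
                have h1 : a ⟨i,hi⟩ - η*(b ⟨i,hi⟩ - a ⟨i,hi⟩) ≤ b ⟨i,hi⟩ + η*(b ⟨i,hi⟩ - a ⟨i,hi⟩) := by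
                  have := hl ⟨i,hi⟩; have := hε ⟨i,hi⟩; linarith
                have := hy.1
                linarith
              · have : j = ⟨i,hi⟩ := Fin.ext hjeq
                rw [this]
                exact hy.1
        · -- interior gap piece
          have hi1 : i+1 < m := by omega
          rw [show 4*i+4+1 = 4*(i+1)+1 from by ring, hu1 (i+1) hi1]
          rw [if_neg (by omega : ¬(i = m-1 ∧ b ⟨i,hi⟩ = 1)),
            if_neg (by omega : ¬(i+1 = 0 ∧ a ⟨i+1,hi1⟩ = 0))]
          refine ⟨0, 0, ?_⟩
          intro y hy
          rw [hfzero y ?_]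
          · ring
          · intro j
            rcases le_or_gt (j:ℕ) i with hji | hji
            · right
              rcases lt_or_eq_of_le hji with hjlt | hjeq
              · have hch := hchain j ⟨i,hi⟩ hjlt
                have h1 : a ⟨i,hi⟩ - η*(b ⟨i,hi⟩ - a ⟨i,hi⟩) ≤ b ⟨i,hi⟩ + η*(b ⟨i,hi⟩ - a ⟨i,hi⟩) := by
                  have := hl ⟨i,hi⟩; have := hε ⟨i,hi⟩; linarith
                have := hy.1
                linarith
              · have : j = ⟨i,hi⟩ := Fin.ext hjeq
                rw [this]
                exact hy.1
            · left
              have hji1 : (i:ℕ)+1 ≤ (j:ℕ) := hji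
              rcases lt_or_eq_of_le hji1 with hjlt | hjeq
              · have hch := hchain ⟨i+1,hi1⟩ j (by simpa using hjlt)
                have h1 : a ⟨i+1,hi1⟩ - η*(b ⟨i+1,hi1⟩ - a ⟨i+1,hi1⟩) ≤ b ⟨i+1,hi1⟩ + η*(b ⟨i+1,hi1⟩ - a ⟨i+1,hi1⟩) := by
                  have := hl ⟨i+1,hi1⟩; have := hε ⟨i+1,hi1⟩; linarith
                have := hy.2
                linarith
              · have : j = ⟨i+1,hi1⟩ := Fin.ext hjeq.symm
                rw [this]
                exact hy.2
end
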